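/- Let X and Y be independent absolutely continuous real-valued random variables, each symmetrically distributed about θ, with the support of X contained in the support of Y. If X is more peaked about θ than Y, i.e., P(|X − θ| ≤ t) ≥ P(|Y − θ| ≤ t) for all t ≥ 0, then X is Pitman closer to θ than Y, i.e., P(|X − θ| < |Y − θ|) ≥ 1/2. -/

import Mathlib

open MeasureTheory ProbabilityTheory
open scoped ENNReal

/-- The (topological) support of a measure on `ℝ`: the set of points all of whose
neighbourhoods have positive measure. -/
def measureSupport (ν : MeasureTheory.Measure ℝ) : Set ℝ :=
  {x | ∀ U ∈ nhds x, ν U ≠ 0}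

open Set in
/-- Lemma 4.  Let `X` and `Y` be independent absolutely continuous
real random variables, each symmetric about `θ`, with the support of `X` contained in
the support of `Y`.  If `X` is more peaked about `θ` than `Y`, i.e.
`P(|X - θ| ≤ t) ≥ P(|Y - θ| ≤ t)` for all `t ≥ 0`, then `X` is Pitman closer to `θ`
than `Y`, i.e. `P(|X - θ| < |Y - θ|) ≥ 1/2`. -/
theorem pitman_closer_of_more_peaked
    {Ω : Type*} [MeasurableSpace Ω] (μ : Measure Ω) [IsProbabilityMeasure μ]
    (X Y : Ω → ℝ) (hXmeas : Measurable X) (hYmeas : Measurable Y)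
    (hindep : IndepFun X Y μ) (θ : ℝ)
    -- symmetry about `θ`
    (hXsym : Measure.map (fun ω => X ω - θ) μ = Measure.map (fun ω => θ - X ω) μ)
    (hYsym : Measure.map (fun ω => Y ω - θ) μ = Measure.map (fun ω => θ - Y ω) μ)
    -- absolute continuity
    (hXac : HasPDF X μ) (hYac : HasPDF Y μ)
    -- the support of `X` is contained in the support of `Y`
    (hsupp : measureSupport (Measure.map X μ) ⊆ measureSupport (Measure.map Y μ))
    -- `X` is more peaked about `θ` than `Y`
    (hpeak : ∀ t : ℝ, 0 ≤ t → μ {ω | |X ω - θ| ≤ t} ≥ μ {ω | |Y ω - θ| ≤ t}) :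
    (μ {ω | |X ω - θ| < |Y ω - θ|}).toReal ≥ 1 / 2 := by
  haveI := hXac; haveI := hYac
  set A : Ω → ℝ := fun ω => |X ω - θ| with hA
  set B : Ω → ℝ := fun ω => |Y ω - θ| with hB
  have hAm : Measurable A := (hXmeas.sub measurable_const).abs
  have hBm : Measurable B := (hYmeas.sub measurable_const).abs
  -- A and B are independent
  have hiAB : IndepFun A B μ :=
    hindep.comp ((measurable_id.sub measurable_const).abs)
      ((measurable_id.sub measurable_const).abs)
  set νA := μ.map A with hνA
  set νB := μ.map B with hνB
  haveI : IsProbabilityMeasure νA := Measure.isProbabilityMeasure_map hAm.aemeasurable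
  haveI : IsProbabilityMeasure νB := Measure.isProbabilityMeasure_map hBm.aemeasurable
  -- no atoms
  have hX0 : ∀ c : ℝ, μ (X ⁻¹' {c}) = 0 := fun c => by
    have h := (HasPDF.absolutelyContinuous : Measure.map X μ ≪ volume) (measure_singleton c)
    rwa [Measure.map_apply hXmeas (measurableSet_singleton c)] at h
  have hY0 : ∀ c : ℝ, μ (Y ⁻¹' {c}) = 0 := fun c => by
    have h := (HasPDF.absolutelyContinuous : Measure.map Y μ ≪ volume) (measure_singleton c)
    rwa [Measure.map_apply hYmeas (measurableSet_singleton c)] at h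
  have habs0 : ∀ (Z : Ω → ℝ) (hZm : Measurable Z), (∀ c : ℝ, μ (Z ⁻¹' {c}) = 0) →
      ∀ b : ℝ, μ ((fun ω => |Z ω - θ|) ⁻¹' {b}) = 0 := by
    intro Z hZm hZ0 b
    have hsub : (fun ω => |Z ω - θ|) ⁻¹' {b} ⊆ Z ⁻¹' {b + θ} ∪ Z ⁻¹' {-b + θ} := by
      intro ω h
      simp only [Set.mem_preimage, Set.mem_singleton_iff, Set.mem_union] at h ⊢
      have hb : 0 ≤ b := h ▸ abs_nonneg _
      rcases (abs_eq hb).mp h with h' | h'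
      · exact Or.inl (by linarith)
      · exact Or.inr (by linarith)
    exact measure_mono_null hsub (measure_union_null (hZ0 _) (hZ0 _))
  haveI : NullSingletonClass νA := by
    constructor
    intro b
    rw [hνA, Measure.map_apply hAm (measurableSet_singleton b)]
    exact habs0 X hXmeas hX0 b
  haveI : NullSingletonClass νB := by
    constructor
    intro b
    rw [hνB, Measure.map_apply hBm (measurableSet_singleton b)]
    exact habs0 Y hYmeas hY0 b
  set s : Set (ℝ × ℝ) := {p : ℝ × ℝ | p.1 < p.2} with hs
  have hsm : MeasurableSet s := measurableSet_lt measurable_fst measurable_snd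
  -- rewrite the target probability as a product measure
  have hmap : μ.map (fun ω => (A ω, B ω)) = νA.prod νB :=
    (indepFun_iff_map_prod_eq_prod_map_map hAm.aemeasurable hBm.aemeasurable).mp hiAB
  have key : μ {ω | A ω < B ω} = (νA.prod νB) s := by
    rw [← hmap, Measure.map_apply (hAm.prodMk hBm) hsm]
    rfl
  -- pointwise comparison of CDFs
  have hcomp : ∀ b : ℝ, νB (Iio b) ≤ νA (Iio b) := by
    intro b
    rcases le_or_gt b 0 with hb | hb
    · have : B ⁻¹' (Iio b) = ∅ := by
        ext ω
        simp only [Set.mem_preimage, mem_Iio, Set.mem_empty_iff_false, iff_false, not_lt]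
        exact le_trans hb (abs_nonneg _)
      rw [hνB, Measure.map_apply hBm measurableSet_Iio, this, measure_empty]
      exact zero_le
    · have h1 : νA (Iio b) = νA (Iic b) := measure_congr Iio_ae_eq_Iic
      have h2 : νB (Iio b) ≤ νB (Iic b) := measure_mono Iio_subset_Iic_self
      rw [h1]
      refine le_trans h2 ?_
      rw [hνA, hνB, Measure.map_apply hAm measurableSet_Iic,
        Measure.map_apply hBm measurableSet_Iic]
      exact hpeak b hb.le
  -- product measure comparison via Fubini
  have hstep : (νB.prod νB) s ≤ (νA.prod νB) s := by
    rw [Measure.prod_apply_symm hsm, Measure.prod_apply_symm hsm]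
    refine lintegral_mono fun b => ?_
    have : (fun x => (x, b)) ⁻¹' s = Iio b := rfl
    rw [this]
    exact hcomp b
  -- the symmetric product measure gives the strict inequality set measure 1/2
  have hhalf : (νB.prod νB) s = 1 / 2 := by
    set P := νB.prod νB with hP
    haveI : IsProbabilityMeasure P := by rw [hP]; infer_instance
    have ht : P {p : ℝ × ℝ | p.2 < p.1} = P s := by
      have hswap : Measure.map Prod.swap P = P := Measure.prod_swap
      have : {p : ℝ × ℝ | p.2 < p.1} = Prod.swap ⁻¹' s := rfl
      rw [this, ← Measure.map_apply measurable_swap hsm, hswap]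
    have hd : P {p : ℝ × ℝ | p.1 = p.2} = 0 := by
      rw [hP, Measure.prod_apply (measurableSet_eq_fun measurable_fst measurable_snd)]
      have : ∀ x : ℝ, (Prod.mk x ⁻¹' {p : ℝ × ℝ | p.1 = p.2}) = {x} := by
        intro x; ext y; simp [eq_comm]
      simp_rw [this]
      simp
    have hcompl : P sᶜ = P s := by
      have hsc : sᶜ = {p : ℝ × ℝ | p.2 < p.1} ∪ {p : ℝ × ℝ | p.1 = p.2} := by
        ext p
        simp only [hs, Set.mem_compl_iff, Set.mem_setOf_eq, not_lt, Set.mem_union]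
        constructor
        · intro h; rcases lt_or_eq_of_le h with h' | h'
          · exact Or.inl h'
          · exact Or.inr h'.symm
        · rintro (h | h)
          · exact h.le
          · exact h.ge
      have hle : P sᶜ ≤ P s := by
        rw [hsc]
        calc P ({p : ℝ × ℝ | p.2 < p.1} ∪ {p : ℝ × ℝ | p.1 = p.2})
            ≤ P {p : ℝ × ℝ | p.2 < p.1} + P {p : ℝ × ℝ | p.1 = p.2} := measure_union_le _ _
          _ = P s := by rw [ht, hd, add_zero]
      have hge : P s ≤ P sᶜ := by
        rw [hsc, ← ht]
        exact le_trans (measure_mono Set.subset_union_left) le_rfl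
      exact le_antisymm hle hge
    have hsum : P s + P s = 1 := by
      calc P s + P s = P s + P sᶜ := by rw [hcompl]
        _ = P Set.univ := measure_add_measure_compl hsm
        _ = 1 := measure_univ
    rw [ENNReal.eq_div_iff (by norm_num) (by norm_num)]
    rw [two_mul]
    exact hsum
  -- conclude
  have hfinal : (1 / 2 : ℝ≥0∞) ≤ μ {ω | A ω < B ω} := by
    rw [key, ← hhalf]; exact hstep
  have := ENNReal.toReal_mono (measure_ne_top μ _) hfinal
  simpa using this
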